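/- Let p: ℕ∖{0} → [0,1] be a probability distribution with p[x≥2] > 0. For every relational first-order sentence ψ: ψ ∈ Φ_0 (i.e., lim_{n→∞} μ_{n,p}[π⟦ψ⟧ = 0] = 1 for random ℕ-interpretations) if and only if ψ is asymptotically almost surely false under classical Boolean semantics on random finite τ-structures with atomic probability 1/2. -/

import Mathlib

open MeasureTheory Filter Set
open scoped ENNReal BigOperators

/-- A (fully instantiated) literal over the relational vocabulary given by the
relation symbols `R` with arities `ar`, on the universe `A`: a relation symbol,
a tuple of arguments, and a polarity (`true` = positive atom, `false` = negated atom). -/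
structure Lit (R : Type) (ar : R → ℕ) (A : Type) : Type where
  rel : R
  args : Fin (ar rel) → A
  pos : Bool

/-- A (fully instantiated) relational atom. -/
abbrev Atoms (R : Type) (ar : R → ℕ) (A : Type) : Type := (r : R) × (Fin (ar r) → A)

variable {R : Type} {ar : R → ℕ} {A B K : Type}

/-- Renaming of a literal along a map of universes. -/
def Lit.map (f : A → B) (l : Lit R ar A) : Lit R ar B :=
  ⟨l.rel, fun j => f (l.args j), l.pos⟩

/-- A `K`-interpretation (or atomic type) is model-defining / consistent (w.r.t. the
zero element `z` of `K`) if out of each pair of complementary literals exactly one is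
mapped to `z`. -/
def ModelDefining (z : K) (π : Lit R ar A → K) : Prop :=
  ∀ (r : R) (as : Fin (ar r) → A), (π ⟨r, as, true⟩ = z ↔ π ⟨r, as, false⟩ ≠ z)

/-- The atomic `m`-type realised by the tuple `a` in the interpretation `π`. -/
def typeOf {m : ℕ} (π : Lit R ar A → K) (a : Fin m → A) : Lit R ar (Fin m) → K :=
  fun l => π (l.map a)

/-- The tuple `a` (of pairwise distinct elements) realises the atomic `m`-type `ρ` in `π`. -/
def Realizes {m : ℕ} (π : Lit R ar A → K) (a : Fin m → A) (ρ : Lit R ar (Fin m) → K) : Prop :=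
  Function.Injective a ∧ typeOf π a = ρ

/-- The atomic `(m+1)`-type `ρp` extends the atomic `m`-type `ρ`. -/
def Extends {m : ℕ} (ρp : Lit R ar (Fin (m+1)) → K) (ρ : Lit R ar (Fin m) → K) : Prop :=
  ∀ l : Lit R ar (Fin m), ρp (l.map Fin.castSucc) = ρ l

/-- The `k`-extension property of an interpretation `π` (with zero element `z`). -/
def ExtProp (z : K) (π : Lit R ar A → K) (k : ℕ) : Prop :=
  ∀ m, m < k → ∀ ρ : Lit R ar (Fin m) → K, ModelDefining z ρ →
    ∀ ρp : Lit R ar (Fin (m+1)) → K, ModelDefining z ρp → Extends ρp ρ →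
      ∀ a : Fin m → A, Realizes π a ρ →
        ∃ b : A, b ∉ Set.range a ∧ Realizes π (Fin.snoc a b) ρp

/-- A sequence of extended nonnegative reals converges to `L` exponentially fast. -/
def ExpConv (f : ℕ → ℝ≥0∞) (L : ℝ≥0∞) : Prop :=
  ∃ C q : ℝ≥0∞, C ≠ ⊤ ∧ q < 1 ∧ ∀ n, f n ≤ L + C * q ^ n ∧ L ≤ f n + C * q ^ n

/-- The interpretation determined by a sample point: each atom gets a pair
(value of positive literal, value of negated literal). -/
def interpOf (ω : Atoms R ar A → K × K) : Lit R ar A → K :=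
  fun l => if l.pos then (ω ⟨l.rel, l.args⟩).1 else (ω ⟨l.rel, l.args⟩).2

/-- The per-atom distribution: with probability 1/2 the atom is true (its negation
gets value `z`, i.e. false, and its value is sampled from `p`), with probability 1/2
it is false (symmetrically). -/
noncomputable def atomMeasure [MeasurableSpace K] (z : K) (p : Measure K) : Measure (K × K) :=
  (2⁻¹ : ℝ≥0∞) • (Measure.map (fun j => (j, z)) p + Measure.map (fun j => (z, j)) p)

/-- The distribution `μ_{n,p}` of random `K`-interpretations on universe `[n]`,
presented on the sample space assigning to each atom the pair of values of its
positive and negated literal. -/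
noncomputable def muI [MeasurableSpace K] [Fintype R] (z : K) (p : Measure K) (n : ℕ) :
    Measure (Atoms R ar (Fin n) → K × K) :=
  Measure.pi fun _ => atomMeasure z p
/-- First-order formulae in negation normal form over the vocabulary `(R, ar)`,
with standard quantifiers, in a context of `i` variables (de Bruijn style:
`ex`/`all` bind the last variable of the extended context). -/
inductive FO (R : Type) (ar : R → ℕ) : ℕ → Type
  | eq   : {i : ℕ} → Fin i → Fin i → FO R ar i
  | ne   : {i : ℕ} → Fin i → Fin i → FO R ar i
  | atom : {i : ℕ} → (r : R) → (Fin (ar r) → Fin i) → Bool → FO R ar i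
  | or   : {i : ℕ} → FO R ar i → FO R ar i → FO R ar i
  | and  : {i : ℕ} → FO R ar i → FO R ar i → FO R ar i
  | ex   : {i : ℕ} → FO R ar (i+1) → FO R ar i
  | all  : {i : ℕ} → FO R ar (i+1) → FO R ar i

/-- Semiring semantics of first-order formulae over a commutative semiring `K`:
`∨`/`∃` are sums, `∧`/`∀` are products. -/
noncomputable def evalS [CommSemiring K] [Fintype A] [DecidableEq A]
    (π : Lit R ar A → K) : {i : ℕ} → FO R ar i → (Fin i → A) → K
  | _, .eq j l, v => if v j = v l then 1 else 0
  | _, .ne j l, v => if v j = v l then 0 else 1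
  | _, .atom r as pos, v => π ⟨r, fun j => v (as j), pos⟩
  | _, .or φ θ, v => evalS π φ v + evalS π θ v
  | _, .and φ θ, v => evalS π φ v * evalS π θ v
  | _, .ex φ, v => ∑ b : A, evalS π φ (Fin.snoc v b)
  | _, .all φ, v => ∏ b : A, evalS π φ (Fin.snoc v b)

/-- Semantics of first-order formulae in a lattice semiring (a bounded distributive
lattice, with `0 = ⊥`, `1 = ⊤`, addition `⊔` and multiplication `⊓`). -/
noncomputable def evalL [DistribLattice K] [BoundedOrder K] [Fintype A] [DecidableEq A]
    (π : Lit R ar A → K) : {i : ℕ} → FO R ar i → (Fin i → A) → K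
  | _, .eq j l, v => if v j = v l then ⊤ else ⊥
  | _, .ne j l, v => if v j = v l then ⊥ else ⊤
  | _, .atom r as pos, v => π ⟨r, fun j => v (as j), pos⟩
  | _, .or φ θ, v => evalL π φ v ⊔ evalL π θ v
  | _, .and φ θ, v => evalL π φ v ⊓ evalL π θ v
  | _, .ex φ, v => Finset.univ.sup fun b : A => evalL π φ (Fin.snoc v b)
  | _, .all φ, v => Finset.univ.inf fun b : A => evalL π φ (Fin.snoc v b)

/-- Classical Boolean satisfaction of a first-order formula (in NNF) in the
`τ`-structure determined by `S` (telling which atoms are true). -/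
def bsat (S : Atoms R ar A → Bool) : {i : ℕ} → FO R ar i → (Fin i → A) → Prop
  | _, .eq j l, v => v j = v l
  | _, .ne j l, v => v j ≠ v l
  | _, .atom r as pos, v => S ⟨r, fun j => v (as j)⟩ = pos
  | _, .or φ θ, v => bsat S φ v ∨ bsat S θ v
  | _, .and φ θ, v => bsat S φ v ∧ bsat S θ v
  | _, .ex φ, v => ∃ b : A, bsat S φ (Fin.snoc v b)
  | _, .all φ, v => ∀ b : A, bsat S φ (Fin.snoc v b)

/-- The distribution of random `τ`-structures on `[n]` with atomic probability 1/2: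
each atom is true independently with probability 1/2. -/
noncomputable def muB {R : Type} [Fintype R] {ar : R → ℕ} (n : ℕ) :
    Measure (Atoms R ar (Fin n) → Bool) :=
  Measure.pi fun _ => (2⁻¹ : ℝ≥0∞) • (Measure.dirac true + Measure.dirac false)


section Aux

open scoped symmDiff

variable {R : Type} {ar : R → ℕ}

/-- An ω is "good" if for each atom exactly one of the two literal values is zero. -/
def GoodOmega {A : Type} (ω : Atoms R ar A → ℕ × ℕ) : Prop :=
  ∀ a : Atoms R ar A, ((ω a).1 = 0 ↔ (ω a).2 ≠ 0)

lemma evalS_ne_zero_iff {A : Type} [Fintype A] [DecidableEq A]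
    (ω : Atoms R ar A → ℕ × ℕ) (hω : GoodOmega ω) :
    ∀ {i : ℕ} (φ : FO R ar i) (v : Fin i → A),
      evalS (interpOf ω) φ v ≠ 0 ↔ bsat (fun a => decide ((ω a).1 ≠ 0)) φ v := by
  intro i φ
  induction φ with
  | eq j l =>
      intro v; by_cases h : v j = v l <;> simp [evalS, bsat, h]
  | ne j l =>
      intro v; by_cases h : v j = v l <;> simp [evalS, bsat, h]
  | atom r as pos =>
      intro v
      cases pos with
      | true => simp [evalS, bsat, interpOf]
      | false =>
          simp only [evalS, bsat, interpOf, Bool.false_eq_true, if_false,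
            decide_eq_false_iff_not, not_not]
          exact (hω ⟨r, fun j => v (as j)⟩).symm
  | or φ θ ihφ ihθ =>
      intro v
      simp only [evalS, bsat, ← ihφ, ← ihθ, Ne, Nat.add_eq_zero, not_and_or]
  | and φ θ ihφ ihθ =>
      intro v
      simp only [evalS, bsat, ← ihφ, ← ihθ, Ne, Nat.mul_eq_zero, not_or]
  | ex φ ih =>
      intro v
      simp only [evalS, bsat, ← ih, Ne, Finset.sum_eq_zero_iff, Finset.mem_univ,
        forall_true_left]
      push_neg
      rfl
  | all φ ih =>
      intro v
      simp only [evalS, bsat, ← ih, Ne, Finset.prod_eq_zero_iff, Finset.mem_univ,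
        true_and, exists_prop]
      push_neg
      rfl

lemma atomMeasure_prob (p : Measure ℕ) [IsProbabilityMeasure p] :
    IsProbabilityMeasure (atomMeasure (K := ℕ) (0 : ℕ) p) := by
  constructor
  simp only [atomMeasure, Measure.smul_apply, Measure.add_apply,
    Measure.map_apply Measurable.of_discrete MeasurableSet.univ, Set.preimage_univ,
    measure_univ, smul_eq_mul]
  rw [one_add_one_eq_two]
  exact ENNReal.inv_mul_cancel two_ne_zero ENNReal.ofNat_ne_top

lemma boolMeasure_prob :
    IsProbabilityMeasure ((2⁻¹ : ℝ≥0∞) • (Measure.dirac true + Measure.dirac false)) := by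
  constructor
  simp only [Measure.smul_apply, Measure.add_apply, measure_univ, smul_eq_mul]
  rw [one_add_one_eq_two]
  exact ENNReal.inv_mul_cancel two_ne_zero ENNReal.ofNat_ne_top

lemma map_decide_eq_dirac (p : Measure ℕ) [IsProbabilityMeasure p] (hp0 : p {0} = 0) :
    Measure.map (fun j : ℕ => decide (j ≠ 0)) p = Measure.dirac true := by
  ext s hs
  rw [Measure.map_apply Measurable.of_discrete hs, Measure.dirac_apply' _ hs]
  by_cases ht : true ∈ s
  · have h1 : ({0} : Set ℕ)ᶜ ⊆ (fun j : ℕ => decide (j ≠ 0)) ⁻¹' s := by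
      intro j hj
      simp only [Set.mem_compl_iff, Set.mem_singleton_iff] at hj
      simpa [Set.mem_preimage, hj] using ht
    have hcompl : p ({0} : Set ℕ)ᶜ = 1 := by
      rw [measure_compl (measurableSet_singleton 0) (measure_ne_top _ _), hp0, measure_univ]
      simp
    have hle : (1 : ℝ≥0∞) ≤ p ((fun j : ℕ => decide (j ≠ 0)) ⁻¹' s) := by
      rw [← hcompl]; exact measure_mono h1
    have hge : p ((fun j : ℕ => decide (j ≠ 0)) ⁻¹' s) ≤ 1 := prob_le_one
    rw [le_antisymm hge hle, Set.indicator_of_mem ht]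
    rfl
  · have h1 : (fun j : ℕ => decide (j ≠ 0)) ⁻¹' s ⊆ ({0} : Set ℕ) := by
      intro j hj
      simp only [Set.mem_preimage] at hj
      by_contra hj0
      simp only [Set.mem_singleton_iff] at hj0
      simp [hj0] at hj
      exact ht hj
    have := measure_mono (μ := p) h1
    rw [hp0] at this
    rw [le_antisymm this (zero_le), Set.indicator_of_notMem ht]

lemma map_atomMeasure (p : Measure ℕ) [IsProbabilityMeasure p] (hp0 : p {0} = 0) :
    Measure.map (fun q : ℕ × ℕ => decide (q.1 ≠ 0)) (atomMeasure (0 : ℕ) p)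
      = (2⁻¹ : ℝ≥0∞) • (Measure.dirac true + Measure.dirac false) := by
  unfold atomMeasure
  rw [Measure.map_smul, Measure.map_add _ _ Measurable.of_discrete,
    Measure.map_map Measurable.of_discrete Measurable.of_discrete,
    Measure.map_map Measurable.of_discrete Measurable.of_discrete]
  have h1 : ((fun q : ℕ × ℕ => decide (q.1 ≠ 0)) ∘ (fun j : ℕ => (j, (0 : ℕ))))
      = fun j : ℕ => decide (j ≠ 0) := rfl
  have h2 : ((fun q : ℕ × ℕ => decide (q.1 ≠ 0)) ∘ (fun j : ℕ => ((0 : ℕ), j)))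
      = fun _ : ℕ => false := by
    funext j; simp
  rw [h1, h2, map_decide_eq_dirac p hp0, Measure.map_const, measure_univ, one_smul]

variable [Fintype R]

lemma map_muI_eq_muB {n : ℕ} (p : Measure ℕ) [IsProbabilityMeasure p] (hp0 : p {0} = 0) :
    Measure.map
      (fun (ω : Atoms R ar (Fin n) → ℕ × ℕ) (a : Atoms R ar (Fin n)) => decide ((ω a).1 ≠ 0))
      (muI (0 : ℕ) p n) = muB n := by
  haveI := atomMeasure_prob p
  haveI := boolMeasure_prob
  unfold muB
  refine (Measure.pi_eq fun s hs => ?_).symm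
  rw [Measure.map_apply Measurable.of_discrete (MeasurableSet.univ_pi hs)]
  have hpre : (fun (ω : Atoms R ar (Fin n) → ℕ × ℕ) (a : Atoms R ar (Fin n)) =>
        decide ((ω a).1 ≠ 0)) ⁻¹' Set.univ.pi s
      = Set.univ.pi (fun a => (fun q : ℕ × ℕ => decide (q.1 ≠ 0)) ⁻¹' s a) := by
    ext ω
    simp [Set.mem_pi]
  rw [hpre, muI, Measure.pi_pi]
  refine Finset.prod_congr rfl fun a _ => ?_
  rw [← Measure.map_apply Measurable.of_discrete (hs a), map_atomMeasure p hp0]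

lemma muI_good {n : ℕ} (p : Measure ℕ) [IsProbabilityMeasure p] (hp0 : p {0} = 0) :
    muI (ar := ar) (0 : ℕ) p n {ω | ¬ GoodOmega ω} = 0 := by
  haveI := atomMeasure_prob p
  have hsub : {ω : Atoms R ar (Fin n) → ℕ × ℕ | ¬ GoodOmega ω}
      ⊆ ⋃ a : Atoms R ar (Fin n),
          Function.eval a ⁻¹' {q : ℕ × ℕ | ¬ (q.1 = 0 ↔ q.2 ≠ 0)} := by
    intro ω hω
    simp only [GoodOmega, not_forall] at hω
    obtain ⟨a, ha⟩ := hω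
    exact Set.mem_iUnion.2 ⟨a, ha⟩
  refine measure_mono_null hsub (measure_iUnion_null fun a => ?_)
  unfold muI
  refine Measure.pi_eval_preimage_null _ ?_
  have : atomMeasure (K := ℕ) (0 : ℕ) p {q : ℕ × ℕ | ¬ (q.1 = 0 ↔ q.2 ≠ 0)} = 0 := by
    simp only [atomMeasure, Measure.smul_apply, Measure.add_apply,
      Measure.map_apply Measurable.of_discrete
        (MeasurableSet.of_discrete (s := {q : ℕ × ℕ | ¬ (q.1 = 0 ↔ q.2 ≠ 0)}))]
    have e1 : (fun j : ℕ => (j, (0:ℕ))) ⁻¹' {q : ℕ × ℕ | ¬ (q.1 = 0 ↔ q.2 ≠ 0)}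
        = {0} := by
      ext j; simp
    have e2 : (fun j : ℕ => ((0:ℕ), j)) ⁻¹' {q : ℕ × ℕ | ¬ (q.1 = 0 ↔ q.2 ≠ 0)}
        = {0} := by
      ext j; simp
    rw [e1, e2, hp0]
    simp
  exact this

lemma muI_evalS_eq {n : ℕ} (p : Measure ℕ) [IsProbabilityMeasure p] (hp0 : p {0} = 0)
    (ψ : FO R ar 0) :
    muI (ar := ar) (0 : ℕ) p n {ω | evalS (interpOf ω) ψ Fin.elim0 = 0}
      = 1 - muB (ar := ar) n {S | bsat S ψ Fin.elim0} := by
  haveI := atomMeasure_prob p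
  haveI := boolMeasure_prob
  haveI := boolMeasure_prob
  haveI : IsProbabilityMeasure (muB (R := R) (ar := ar) n) := by
    unfold muB; exact Measure.pi.instIsProbabilityMeasure _
  have hsub1 : {ω : Atoms R ar (Fin n) → ℕ × ℕ | evalS (interpOf ω) ψ Fin.elim0 = 0}
      \ {ω | ¬ bsat (fun a => decide ((ω a).1 ≠ 0)) ψ Fin.elim0}
      ⊆ {ω | ¬ GoodOmega ω} := by
    rintro ω ⟨h1, h2⟩ hgood
    simp only [Set.mem_setOf_eq, not_not] at h1 h2
    exact (evalS_ne_zero_iff ω hgood ψ Fin.elim0).mpr h2 h1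
  have hsub2 : {ω : Atoms R ar (Fin n) → ℕ × ℕ |
        ¬ bsat (fun a => decide ((ω a).1 ≠ 0)) ψ Fin.elim0}
      \ {ω | evalS (interpOf ω) ψ Fin.elim0 = 0}
      ⊆ {ω | ¬ GoodOmega ω} := by
    rintro ω ⟨h1, h2⟩ hgood
    simp only [Set.mem_setOf_eq] at h1 h2
    exact h1 ((evalS_ne_zero_iff ω hgood ψ Fin.elim0).mp h2)
  have heq : muI (ar := ar) (0 : ℕ) p n {ω | evalS (interpOf ω) ψ Fin.elim0 = 0}
      = muI (ar := ar) (0 : ℕ) p n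
          {ω | ¬ bsat (fun a => decide ((ω a).1 ≠ 0)) ψ Fin.elim0} :=
    measure_congr (MeasureTheory.ae_eq_set.mpr
      ⟨measure_mono_null hsub1 (muI_good p hp0),
       measure_mono_null hsub2 (muI_good p hp0)⟩)
  rw [heq]
  have hmap : muI (ar := ar) (0 : ℕ) p n
      {ω | ¬ bsat (fun a => decide ((ω a).1 ≠ 0)) ψ Fin.elim0}
      = muB (ar := ar) n {S | bsat S ψ Fin.elim0}ᶜ := by
    rw [← map_muI_eq_muB (n := n) p hp0,
      Measure.map_apply Measurable.of_discrete MeasurableSet.of_discrete]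
    rfl
  rw [hmap, measure_compl MeasurableSet.of_discrete (measure_ne_top _ _), measure_univ]

end Aux

/-- Let `p` be a probability distribution on `ℕ ∖ {0}` with
`p[x ≥ 2] > 0`.  A relational first-order sentence `ψ` belongs to `Φ_0`
(random `ℕ`-interpretations almost surely evaluate it to `0`) if and only if `ψ`
is asymptotically almost surely false under classical Boolean semantics on random
finite `τ`-structures with atomic probability 1/2. -/
theorem statement_17
    {R : Type} [Fintype R] [DecidableEq R] {ar : R → ℕ}
    (p : Measure ℕ) [IsProbabilityMeasure p]
    (hp0 : p {0} = 0) (hp2 : 0 < p {j : ℕ | 2 ≤ j})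
    (ψ : FO R ar 0) :
    Tendsto (fun n =>
        muI (ar := ar) (0 : ℕ) p n {ω | evalS (interpOf ω) ψ Fin.elim0 = 0})
      atTop (nhds 1) ↔
    Tendsto (fun n =>
        muB (ar := ar) n {S | bsat S ψ Fin.elim0})
      atTop (nhds 0) := by
  classical
  have key : ∀ n, muI (ar := ar) (0 : ℕ) p n {ω | evalS (interpOf ω) ψ Fin.elim0 = 0}
      = 1 - muB (ar := ar) n {S | bsat S ψ Fin.elim0} := fun n => muI_evalS_eq p hp0 ψ
  have hle : ∀ n, muB (ar := ar) n {S | bsat S ψ Fin.elim0} ≤ 1 := by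
    intro n
    haveI := boolMeasure_prob
    haveI : IsProbabilityMeasure (muB (R := R) (ar := ar) n) := by
      unfold muB; exact Measure.pi.instIsProbabilityMeasure _
    exact prob_le_one
  constructor
  · intro h
    have h2 : Tendsto (fun n => (1 : ℝ≥0∞) -
        muI (ar := ar) (0 : ℕ) p n {ω | evalS (interpOf ω) ψ Fin.elim0 = 0})
        atTop (nhds (1 - 1)) :=
      ENNReal.Tendsto.sub tendsto_const_nhds h (Or.inl ENNReal.one_ne_top)
    rw [tsub_self] at h2
    refine h2.congr fun n => ?_
    rw [key n, ENNReal.sub_sub_cancel ENNReal.one_ne_top (hle n)]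
  · intro h
    have h2 : Tendsto (fun n => (1 : ℝ≥0∞) -
        muB (ar := ar) n {S | bsat S ψ Fin.elim0}) atTop (nhds (1 - 0)) :=
      ENNReal.Tendsto.sub tendsto_const_nhds h (Or.inl ENNReal.one_ne_top)
    rw [tsub_zero] at h2
    refine h2.congr fun n => (key n).symm
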